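/- (Semigroup estimate from Y^{−1} to 𝒳³.) There exists a constant C > 0, depending only on n, L_1,…,L_n and T, such that for every zero-mean ψ₀ with ‖ψ₀‖_{Y^{−1}} < ∞ one has ‖Sψ₀‖_{𝒳³} = Σ_{k∈ℤⁿ_*} ∫_0^T |k|³ e^{−tσ(k)} |ψ̂₀(k)| dt ≤ C ‖ψ₀‖_{Y^{−1}}. -/

import Mathlib

open MeasureTheory
open scoped BigOperators ENNReal NNReal

noncomputable section

/-- Euclidean norm `|k|` of a lattice point `k ∈ ℤⁿ`. -/
def knorm {n : ℕ} (k : Fin n → ℤ) : ℝ := Real.sqrt (∑ i, ((k i : ℝ)) ^ 2)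

/-- The Fourier symbol `σ(k)` of `Δ² + Δ` on the torus `∏ᵢ [0, Lᵢ]`. -/
def ksSymbol {n : ℕ} (L : Fin n → ℝ) (k : Fin n → ℤ) : ℝ :=
  (∑ i, (2 * Real.pi / L i) ^ 2 * ((k i : ℝ)) ^ 2) ^ 2
    - ∑ i, (2 * Real.pi / L i) ^ 2 * ((k i : ℝ)) ^ 2

/-- The time interval `[0, T]`, where `T = ⊤` is allowed (giving `[0, ∞)`). -/
def timeSet (T : ℝ≥0∞) : Set ℝ := {t : ℝ | 0 ≤ t ∧ ENNReal.ofReal t ≤ T}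

/-- Case A (`Lᵢ < 2π` for all `i` and `T = ∞`) or Case B (`T ∈ (0, ∞)`). -/
def CaseAB {n : ℕ} (L : Fin n → ℝ) (T : ℝ≥0∞) : Prop :=
  (T = ⊤ ∧ ∀ i, L i < 2 * Real.pi) ∨ (0 < T ∧ T ≠ ⊤)

/-- `‖f‖_{Y^m} = Σ_{k ∈ ℤⁿ_*} |k|^m |f̂(k)|` (zero-mean functions are identified with
their Fourier coefficient sequences on `ℤⁿ_* = ℤⁿ \ {0}`). -/
def Ynorm {n : ℕ} (m : ℝ) (f : (Fin n → ℤ) → ℂ) : ℝ≥0∞ :=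
  ∑' k : {k : Fin n → ℤ // k ≠ 0}, ENNReal.ofReal (knorm k.1 ^ m * ‖f k.1‖)

/-- `‖f‖_{𝒴^m} = Σ_{k ∈ ℤⁿ_*} sup_{t ∈ [0,T]} |k|^m |f̂(t,k)|`. -/
def calYnorm {n : ℕ} (T : ℝ≥0∞) (m : ℝ) (f : ℝ → (Fin n → ℤ) → ℂ) : ℝ≥0∞ :=
  ∑' k : {k : Fin n → ℤ // k ≠ 0},
    ⨆ t ∈ timeSet T, ENNReal.ofReal (knorm k.1 ^ m * ‖f t k.1‖)

/-- `‖f‖_{𝒳^m} = Σ_{k ∈ ℤⁿ_*} ∫_0^T |k|^m |f̂(t,k)| dt`. -/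
def calXnorm {n : ℕ} (T : ℝ≥0∞) (m : ℝ) (f : ℝ → (Fin n → ℤ) → ℂ) : ℝ≥0∞ :=
  ∑' k : {k : Fin n → ℤ // k ≠ 0},
    ∫⁻ t in timeSet T, ENNReal.ofReal (knorm k.1 ^ m * ‖f t k.1‖)

/-- `‖f‖_{PM^m} = sup_{k ∈ ℤⁿ_*} |k|^m |f̂(k)|`. -/
def PMnorm {n : ℕ} (m : ℝ) (f : (Fin n → ℤ) → ℂ) : ℝ≥0∞ :=
  ⨆ k : {k : Fin n → ℤ // k ≠ 0}, ENNReal.ofReal (knorm k.1 ^ m * ‖f k.1‖)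

/-- `‖f‖_{𝒫ℳ^m} = sup_{t ∈ [0,T]} sup_{k ∈ ℤⁿ_*} |k|^m |f̂(t,k)|`. -/
def calPMnorm {n : ℕ} (T : ℝ≥0∞) (m : ℝ) (f : ℝ → (Fin n → ℤ) → ℂ) : ℝ≥0∞ :=
  ⨆ t ∈ timeSet T, ⨆ k : {k : Fin n → ℤ // k ≠ 0},
    ENNReal.ofReal (knorm k.1 ^ m * ‖f t k.1‖)

/-- The semigroup `S`, acting on Fourier coefficients: `(Sψ₀)^(t,k) = e^{-tσ(k)} ψ̂₀(k)`. -/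
def ksSemigroup {n : ℕ} (L : Fin n → ℝ) (ψ₀ : (Fin n → ℤ) → ℂ) :
    ℝ → (Fin n → ℤ) → ℂ :=
  fun t k => (Real.exp (-(t * ksSymbol L k)) : ℂ) * ψ₀ k

/-- The (normalized) bilinear operator `B`, given on Fourier coefficients by
`B̂(F,G)(t,k) = -∫_0^t e^{-(t-s)σ(k)} Σ_{j ∈ ℤⁿ_*, j ≠ k} ((k-j)·j) F̂(s,k-j) Ĝ(s,j) ds`. -/
def ksBilinear {n : ℕ} (L : Fin n → ℝ) (F G : ℝ → (Fin n → ℤ) → ℂ) :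
    ℝ → (Fin n → ℤ) → ℂ :=
  fun t k =>
    -∫ s in Set.Ioc (0 : ℝ) t,
      (Real.exp (-((t - s) * ksSymbol L k)) : ℂ) *
        ∑' j : {j : Fin n → ℤ // j ≠ 0 ∧ j ≠ k},
          ((∑ i, ((k i : ℝ) - (j.1 i : ℝ)) * (j.1 i : ℝ) : ℝ) : ℂ) *
            F s (k - j.1) * G s j.1

/-- `ψ` is a mild solution of the Kuramoto–Sivashinsky equation on `[0,T]` with data `ψ₀`:
`ψ̂(t,k) = e^{-tσ(k)} ψ̂₀(k) - (1/2) B̂(ψ,ψ)(t,k)` for all `t ∈ [0,T]`, `k ∈ ℤⁿ_*`. -/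
def IsMildSolution {n : ℕ} (L : Fin n → ℝ) (T : ℝ≥0∞)
    (ψ₀ : (Fin n → ℤ) → ℂ) (ψ : ℝ → (Fin n → ℤ) → ℂ) : Prop :=
  ∀ t ∈ timeSet T, ∀ k : Fin n → ℤ, k ≠ 0 →
    ψ t k = (Real.exp (-(t * ksSymbol L k)) : ℂ) * ψ₀ k
      - (1 / 2 : ℂ) * ksBilinear L ψ ψ t k

-- helpers

lemma lint_exp (b : ℝ) (hb : 0 < b) :
    ∫⁻ t in Set.Ici (0:ℝ), ENNReal.ofReal (Real.exp (-(t*b))) = ENNReal.ofReal (1/b) := by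
  rw [setLIntegral_congr (MeasureTheory.Ioi_ae_eq_Ici (a := (0:ℝ))).symm]
  rw [← ofReal_integral_eq_lintegral_ofReal]
  · congr 1
    have h := MeasureTheory.integral_comp_mul_left_Ioi (fun x => Real.exp (-x)) 0 hb
    simp only [mul_zero] at h
    calc ∫ t in Set.Ioi (0:ℝ), Real.exp (-(t*b))
        = ∫ t in Set.Ioi (0:ℝ), Real.exp (-(b*t)) := by simp_rw [mul_comm]
      _ = b⁻¹ • ∫ x in Set.Ioi (0:ℝ), Real.exp (-x) := h
      _ = 1/b := by rw [integral_exp_neg_Ioi_zero]; simp [one_div]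
  · have := exp_neg_integrableOn_Ioi 0 hb
    simpa [mul_comm, IntegrableOn] using this
  · filter_upwards with t using (Real.exp_pos _).le

lemma sq_knorm {n : ℕ} (k : Fin n → ℤ) : knorm k ^ 2 = ∑ i, ((k i : ℝ)) ^ 2 := by
  unfold knorm
  exact Real.sq_sqrt (Finset.sum_nonneg fun i _ => sq_nonneg _)

lemma one_le_sumsq {n : ℕ} {k : Fin n → ℤ} (hk : k ≠ 0) :
    1 ≤ ∑ i, ((k i : ℝ)) ^ 2 := by
  obtain ⟨i, hi⟩ := Function.ne_iff.mp hk
  have hki : k i ≠ 0 := by simpa using hi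
  have h1 : (1:ℝ) ≤ ((k i : ℝ)) ^ 2 := by
    have h2 : 1 ≤ |k i| := Int.one_le_abs hki
    have h3 : (1:ℝ) ≤ |(k i : ℝ)| := by
      rw [← Int.cast_abs]; exact_mod_cast h2
    nlinarith [sq_abs ((k i : ℝ))]
  calc (1:ℝ) ≤ ((k i : ℝ)) ^ 2 := h1
    _ ≤ ∑ i, ((k i : ℝ)) ^ 2 :=
        Finset.single_le_sum (f := fun j => ((k j : ℝ)) ^ 2)
          (fun j _ => sq_nonneg _) (Finset.mem_univ i)

lemma one_le_knorm {n : ℕ} {k : Fin n → ℤ} (hk : k ≠ 0) : 1 ≤ knorm k := by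
  have := one_le_sumsq hk
  unfold knorm
  nlinarith [Real.sq_sqrt (Finset.sum_nonneg fun i (_ : i ∈ Finset.univ) => sq_nonneg ((k i : ℝ))),
    Real.sqrt_nonneg (∑ i, ((k i : ℝ)) ^ 2)]

set_option maxHeartbeats 800000 in
/-- Key integral bound: `∫_{[0,T]} e^{-tσ(k)} dt ≤ C / |k|⁴`. -/
lemma key_integral {n : ℕ} (hn : 1 ≤ n) (L : Fin n → ℝ) (hL : ∀ i, 0 < L i)
    (T : ℝ≥0∞) (hT : CaseAB L T) :
    ∃ C : ℝ, 0 < C ∧ ∀ k : Fin n → ℤ, k ≠ 0 →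
      (∫⁻ t in timeSet T, ENNReal.ofReal (Real.exp (-(t * ksSymbol L k))))
        ≤ ENNReal.ofReal (C / knorm k ^ 4) := by
  have hne : Nonempty (Fin n) := ⟨⟨0, hn⟩⟩
  set a : ℝ := Finset.univ.inf' Finset.univ_nonempty (fun i => (2 * Real.pi / L i) ^ 2) with ha_def
  have ha : 0 < a := by
    rw [ha_def, Finset.lt_inf'_iff]
    intro i _
    exact pow_pos (div_pos (by positivity) (hL i)) 2
  have hq_ge : ∀ k : Fin n → ℤ, a * (∑ i, ((k i : ℝ)) ^ 2)
      ≤ ∑ i, (2 * Real.pi / L i) ^ 2 * ((k i : ℝ)) ^ 2 := by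
    intro k
    rw [Finset.mul_sum]
    apply Finset.sum_le_sum
    intro i _
    exact mul_le_mul_of_nonneg_right (Finset.inf'_le _ (Finset.mem_univ i)) (sq_nonneg _)
  rcases hT with ⟨hTtop, hLsmall⟩ | ⟨hT0, hTne⟩
  · -- Case A
    have ha1 : 1 < a := by
      rw [ha_def, Finset.lt_inf'_iff]
      intro i _
      have h1 : 1 < 2 * Real.pi / L i := (one_lt_div (hL i)).mpr (hLsmall i)
      nlinarith
    have haa : 0 < a * (a - 1) := mul_pos (lt_trans one_pos ha1) (by linarith)
    refine ⟨1 / (a * (a - 1)), one_div_pos.mpr haa, fun k hk => ?_⟩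
    set q := ∑ i, (2 * Real.pi / L i) ^ 2 * ((k i : ℝ)) ^ 2 with hq_def
    set S2 := ∑ i, ((k i : ℝ)) ^ 2 with hS2_def
    have hS2 : 1 ≤ S2 := one_le_sumsq hk
    have hS2pos : 0 < S2 := lt_of_lt_of_le one_pos hS2
    have hq : a * S2 ≤ q := hq_ge k
    have hσ : a * (a - 1) * S2 ^ 2 ≤ ksSymbol L k := by
      have h1 : (a * S2) * (a * S2) ≤ q * q :=
        mul_le_mul hq hq (mul_pos ha hS2pos).le (le_trans (mul_pos ha hS2pos).le hq)
      have h2 : a * q ≤ q * q := by nlinarith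
      have h4 : a * (a * (a - 1) * S2 ^ 2) ≤ a * (q ^ 2 - q) := by
        nlinarith [mul_le_mul_of_nonneg_left h1 (by linarith : (0:ℝ) ≤ a - 1)]
      have h5 := le_of_mul_le_mul_left h4 (lt_trans one_pos ha1)
      unfold ksSymbol
      rw [← hq_def]
      linarith
    have hσpos : 0 < ksSymbol L k := lt_of_lt_of_le (mul_pos haa (pow_pos hS2pos 2)) hσ
    have hts : timeSet T = Set.Ici (0:ℝ) := by
      ext t; simp [timeSet, hTtop]
    have hkn4 : knorm k ^ 4 = S2 ^ 2 := by
      have h := sq_knorm k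
      rw [← hS2_def] at h
      nlinarith
    rw [hts, lint_exp _ hσpos]
    apply ENNReal.ofReal_le_ofReal
    rw [hkn4]
    calc 1 / ksSymbol L k ≤ 1 / (a * (a - 1) * S2 ^ 2) :=
          one_div_le_one_div_of_le (mul_pos haa (pow_pos hS2pos 2)) hσ
      _ = 1 / (a * (a - 1)) / S2 ^ 2 := by rw [div_div]
  · -- Case B
    set T₀ := T.toReal with hT₀_def
    have hT₀ : 0 < T₀ := ENNReal.toReal_pos hT0.ne' hTne
    have hE : 0 < Real.exp (T₀ / 4) := Real.exp_pos _
    have ha0 : a ≠ 0 := ha.ne'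
    have hC1 : 0 < 2 / a ^ 2 := by positivity
    have hC2 : 0 < (2 / a) ^ 2 * T₀ * Real.exp (T₀ / 4) := by positivity
    refine ⟨2 / a ^ 2 + (2 / a) ^ 2 * T₀ * Real.exp (T₀ / 4), by linarith, fun k hk => ?_⟩
    set q := ∑ i, (2 * Real.pi / L i) ^ 2 * ((k i : ℝ)) ^ 2 with hq_def
    set S2 := ∑ i, ((k i : ℝ)) ^ 2 with hS2_def
    have hS2 : 1 ≤ S2 := one_le_sumsq hk
    have hS2pos : 0 < S2 := lt_of_lt_of_le one_pos hS2
    have hq : a * S2 ≤ q := hq_ge k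
    have hkn4 : knorm k ^ 4 = S2 ^ 2 := by
      have h := sq_knorm k
      rw [← hS2_def] at h
      nlinarith
    have hts : timeSet T = Set.Icc 0 T₀ := by
      ext t
      simp only [timeSet, Set.mem_setOf_eq, Set.mem_Icc]
      exact ⟨fun ⟨h1, h2⟩ => ⟨h1, (ENNReal.ofReal_le_iff_le_toReal hTne).mp h2⟩,
        fun ⟨h1, h2⟩ => ⟨h1, (ENNReal.ofReal_le_iff_le_toReal hTne).mpr h2⟩⟩
    rw [hts]
    by_cases hq2 : 2 ≤ q
    · -- large frequencies: σ ≥ a²S2²/2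
      have hσ : a ^ 2 / 2 * S2 ^ 2 ≤ ksSymbol L k := by
        have h1 : (a * S2) * (a * S2) ≤ q * q :=
          mul_le_mul hq hq (mul_pos ha hS2pos).le (le_trans (mul_pos ha hS2pos).le hq)
        have h2 : (0:ℝ) ≤ q * (q - 2) :=
          mul_nonneg (by linarith) (by linarith)
        unfold ksSymbol
        rw [← hq_def]
        nlinarith
      have hd : 0 < a ^ 2 / 2 * S2 ^ 2 := by positivity
      have hσpos : 0 < ksSymbol L k := lt_of_lt_of_le hd hσ
      calc ∫⁻ t in Set.Icc (0:ℝ) T₀, ENNReal.ofReal (Real.exp (-(t * ksSymbol L k)))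
          ≤ ∫⁻ t in Set.Ici (0:ℝ), ENNReal.ofReal (Real.exp (-(t * ksSymbol L k))) :=
            lintegral_mono_set Set.Icc_subset_Ici_self
        _ = ENNReal.ofReal (1 / ksSymbol L k) := lint_exp _ hσpos
        _ ≤ ENNReal.ofReal ((2 / a ^ 2 + (2 / a) ^ 2 * T₀ * Real.exp (T₀ / 4)) / knorm k ^ 4) := by
            apply ENNReal.ofReal_le_ofReal
            rw [hkn4, div_le_div_iff₀ hσpos (pow_pos hS2pos 2)]
            have h₁ := mul_le_mul_of_nonneg_left hσ hC1.le
            have heq : (2 / a ^ 2) * (a ^ 2 / 2 * S2 ^ 2) = S2 ^ 2 := by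
              field_simp
            have h₂ : 0 ≤ (2 / a) ^ 2 * T₀ * Real.exp (T₀ / 4) * ksSymbol L k :=
              mul_nonneg hC2.le hσpos.le
            nlinarith [h₁, heq, h₂]
    · -- small frequencies: σ ≥ -1/4, S2 ≤ 2/a
      push_neg at hq2
      have hσlb : -(1/4 : ℝ) ≤ ksSymbol L k := by
        unfold ksSymbol
        rw [← hq_def]
        nlinarith [sq_nonneg (q - 1/2)]
      have hS2le : S2 ≤ 2 / a := by
        rw [le_div_iff₀ ha]
        nlinarith
      calc ∫⁻ t in Set.Icc (0:ℝ) T₀, ENNReal.ofReal (Real.exp (-(t * ksSymbol L k)))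
          ≤ ∫⁻ _ in Set.Icc (0:ℝ) T₀, ENNReal.ofReal (Real.exp (T₀ / 4)) := by
            apply setLIntegral_mono' measurableSet_Icc
            intro t ht
            apply ENNReal.ofReal_le_ofReal
            apply Real.exp_le_exp.mpr
            nlinarith [ht.1, ht.2]
        _ = ENNReal.ofReal (Real.exp (T₀ / 4)) * volume (Set.Icc (0:ℝ) T₀) :=
            setLIntegral_const _ _
        _ = ENNReal.ofReal (Real.exp (T₀ / 4) * T₀) := by
            rw [Real.volume_Icc, ← ENNReal.ofReal_mul hE.le, sub_zero]
        _ ≤ ENNReal.ofReal ((2 / a ^ 2 + (2 / a) ^ 2 * T₀ * Real.exp (T₀ / 4)) / knorm k ^ 4) := by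
            apply ENNReal.ofReal_le_ofReal
            rw [hkn4, le_div_iff₀ (pow_pos hS2pos 2)]
            have h2a : S2 ^ 2 ≤ (2 / a) ^ 2 := pow_le_pow_left₀ hS2pos.le hS2le 2
            nlinarith [mul_le_mul_of_nonneg_left h2a (mul_pos hE hT₀).le]

/-- the semigroup maps `Y^{-1}` into `𝒳³`, with
`‖Sψ₀‖_{𝒳³} ≤ C ‖ψ₀‖_{Y^{-1}}` for a constant `C` depending only on `n`, `L`, `T`. -/
theorem semigroup_Yminus1_X3_estimate {n : ℕ} (hn : 1 ≤ n)
    (L : Fin n → ℝ) (hL : ∀ i, 0 < L i) (T : ℝ≥0∞) (hT : CaseAB L T) :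
    ∃ C : ℝ, 0 < C ∧ ∀ ψ₀ : (Fin n → ℤ) → ℂ, Ynorm (-1) ψ₀ ≠ ⊤ →
      calXnorm T 3 (ksSemigroup L ψ₀) ≤ ENNReal.ofReal C * Ynorm (-1) ψ₀ := by
  obtain ⟨C, hC, hkey⟩ := key_integral hn L hL T hT
  refine ⟨C, hC, fun ψ₀ _ => ?_⟩
  unfold calXnorm Ynorm
  rw [← ENNReal.tsum_mul_left]
  apply ENNReal.tsum_le_tsum
  rintro ⟨k, hk⟩
  simp only
  set kn := knorm k with hkn_def
  have hkn1 : 1 ≤ kn := one_le_knorm hk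
  have hknpos : 0 < kn := lt_of_lt_of_le one_pos hkn1
  set ψa := ‖ψ₀ k‖ with hψa_def
  have hψa : 0 ≤ ψa := norm_nonneg _
  have hrw3 : kn ^ (3:ℝ) = kn ^ (3:ℕ) := by
    rw [show ((3:ℝ)) = ((3:ℕ):ℝ) by norm_num, Real.rpow_natCast]
  have hrwm1 : kn ^ (-1:ℝ) = kn⁻¹ := Real.rpow_neg_one kn
  have hpt : ∀ t : ℝ,
      ENNReal.ofReal (kn ^ (3:ℝ) * ‖ksSemigroup L ψ₀ t k‖)
        = ENNReal.ofReal (kn ^ (3:ℕ) * ψa) * ENNReal.ofReal (Real.exp (-(t * ksSymbol L k))) := by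
    intro t
    unfold ksSemigroup
    rw [norm_mul, Complex.norm_real, Real.norm_eq_abs, abs_of_pos (Real.exp_pos _), hrw3, ← hψa_def,
      show kn ^ (3:ℕ) * (Real.exp (-(t * ksSymbol L k)) * ψa)
        = (kn ^ (3:ℕ) * ψa) * Real.exp (-(t * ksSymbol L k)) by ring,
      ENNReal.ofReal_mul (by positivity)]
  calc (∫⁻ t in timeSet T, ENNReal.ofReal (kn ^ (3:ℝ) * ‖ksSemigroup L ψ₀ t k‖))
      = ∫⁻ t in timeSet T,
          ENNReal.ofReal (kn ^ (3:ℕ) * ψa) * ENNReal.ofReal (Real.exp (-(t * ksSymbol L k))) :=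
        lintegral_congr fun t => hpt t
    _ = ENNReal.ofReal (kn ^ (3:ℕ) * ψa)
          * ∫⁻ t in timeSet T, ENNReal.ofReal (Real.exp (-(t * ksSymbol L k))) :=
        lintegral_const_mul' _ _ ENNReal.ofReal_ne_top
    _ ≤ ENNReal.ofReal (kn ^ (3:ℕ) * ψa) * ENNReal.ofReal (C / kn ^ 4) :=
        mul_le_mul_right (hkey k hk) _
    _ = ENNReal.ofReal ((kn ^ (3:ℕ) * ψa) * (C / kn ^ 4)) :=
        (ENNReal.ofReal_mul (by positivity)).symm
    _ = ENNReal.ofReal C * ENNReal.ofReal (kn ^ (-1:ℝ) * ψa) := by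
        rw [← ENNReal.ofReal_mul hC.le]
        congr 1
        rw [hrwm1]
        field_simp
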